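/- Let G be a non-trivial finitely generated group and let A be a finitely generated group that is invariably generated but not finitely invariably generated. Then the regular wreath product G ≀ (A × ℤ) is finitely generated and invariably generated but not finitely invariably generated. Moreover, if A contains an element of infinite order, then G ≀ A is finitely generated and invariably generated but not finitely invariably generated. -/

import Mathlib

open Function SemidirectProduct

/-- A subset `S` invariably generates `K` if replacing each element of `S` by an
arbitrary conjugate always yields a generating set of `K`. -/
def InvariablyGenerates (K : Type*) [Group K] (S : Set K) : Prop :=
  ∀ a : K → K, Subgroup.closure ((fun s => (a s)⁻¹ * s * a s) '' S) = ⊤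

/-- `K` is invariably generated if `K` invariably generates itself. -/
def IsIG (K : Type*) [Group K] : Prop :=
  InvariablyGenerates K Set.univ

/-- `K` is finitely invariably generated if some finite subset invariably generates it. -/
def IsFIG (K : Type*) [Group K] : Prop :=
  ∃ S : Set K, S.Finite ∧ InvariablyGenerates K S

/-- The base of the wreath product `G ≀_X H`: the restricted direct product
`⨁_{x ∈ X} G`, realized as the finitely supported functions `X → G`. -/
def WreathBase (G X : Type*) [Group G] : Subgroup (X → G) where
  carrier := {f | (mulSupport f).Finite}
  one_mem' := by simp
  mul_mem' {f g} hf hg := (Set.Finite.union hf hg).subset (mulSupport_mul f g)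
  inv_mem' {f} hf := by simpa using hf

lemma mem_wreathBase {G X : Type*} [Group G] {f : X → G} :
    f ∈ WreathBase G X ↔ (mulSupport f).Finite := Iff.rfl

/-- The permutation action of `H` on the base, `(h • f) x = f (h⁻¹ • x)`, so that in the
wreath product conjugation by `h` (i.e. `h · g^{(x)} · h⁻¹`) sends the coordinate subgroup
`G_x` to `G_{h • x}`; equivalently `h⁻¹ · g^{(x)} · h = g^{(h⁻¹ • x)}`, which is the
left-action rendering of "conjugation multiplies indices on the right". -/
def wreathAut (G H X : Type*) [Group G] [Group H] [MulAction H X] :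
    H →* MulAut (WreathBase G X) where
  toFun h :=
    { toFun := fun f => ⟨fun x => (f : X → G) (h⁻¹ • x),
        mem_wreathBase.mpr (((mem_wreathBase.mp f.2).image (h • ·)).subset
          fun x hx => ⟨h⁻¹ • x, hx, by simp⟩)⟩
      invFun := fun f => ⟨fun x => (f : X → G) (h • x),
        mem_wreathBase.mpr (((mem_wreathBase.mp f.2).image (h⁻¹ • ·)).subset
          fun x hx => ⟨h • x, hx, by simp⟩)⟩
      left_inv := fun f => Subtype.ext (funext fun x => by simp)
      right_inv := fun f => Subtype.ext (funext fun x => by simp)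
      map_mul' := fun f g => Subtype.ext (funext fun x => by simp) }
  map_one' := by
    ext f x
    simp
  map_mul' h₁ h₂ := by
    ext f x
    simp [mul_smul]

/-- The restricted wreath product `G ≀_X H`. -/
abbrev WreathProduct (G H X : Type*) [Group G] [Group H] [MulAction H X] :=
  WreathBase G X ⋊[wreathAut G H X] H

open scoped Classical in
/-- `g^{(y)}`: the element of the base which is `g` in coordinate `y` and trivial elsewhere. -/
noncomputable def WreathBase.single {G : Type*} (X : Type*) [Group G] (y : X) :
    G →* WreathBase G X where
  toFun g := ⟨fun x => if x = y then g else 1,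
    mem_wreathBase.mpr ((Set.finite_singleton y).subset fun x hx => by
      by_contra hxy
      exact hx (if_neg hxy))⟩
  map_one' := Subtype.ext (funext fun x => by simp)
  map_mul' g₁ g₂ := Subtype.ext (funext fun x => by by_cases h : x = y <;> simp [h])

/-- The embedding of `G` onto the coordinate subgroup `G_y` of the wreath product. -/
noncomputable def coordHom (G H : Type*) {X : Type*} [Group G] [Group H] [MulAction H X]
    (y : X) : G →* WreathProduct G H X :=
  SemidirectProduct.inl.comp (WreathBase.single X y)

/-- `H_X` is of torsion-type if there is `y ∈ X` such that for every `x` in the `H`-orbit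
of `y` and every `k ∈ H`, the `⟨k⟩`-orbit of `x` is finite. -/
def IsTorsionType (H X : Type*) [Group H] [MulAction H X] : Prop :=
  ∃ y : X, ∀ x ∈ MulAction.orbit H y, ∀ k : H, (Set.range fun n : ℤ => k ^ n • x).Finite

/-- A `Γ_z`-set: a set of base elements containing, for every `g ∈ G`, an element whose
coordinate at `z` is `g`. -/
def IsGammaSet {G X : Type*} [Group G] (z : X) (Γ : Set (WreathBase G X)) : Prop :=
  ∀ g : G, ∃ f ∈ Γ, (f : X → G) z = g

/-- The action of `H` on the base `⨁_{h ∈ H} G` of the regular wreath product `G ≀ H`,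
given by right multiplication on the index set: `(φ h f) x = f (x * h)`, so that
`h⁻¹ · g^{(x)} · h = g^{(x · h)}`. -/
def regularWreathAut (G H : Type*) [Group G] [Group H] : H →* MulAut (WreathBase G H) where
  toFun h :=
    { toFun := fun f => ⟨fun x => (f : H → G) (x * h),
        mem_wreathBase.mpr (((mem_wreathBase.mp f.2).image (· * h⁻¹)).subset
          fun x hx => ⟨x * h, hx, by simp⟩)⟩
      invFun := fun f => ⟨fun x => (f : H → G) (x * h⁻¹),
        mem_wreathBase.mpr (((mem_wreathBase.mp f.2).image (· * h)).subset
          fun x hx => ⟨x * h⁻¹, hx, by simp⟩)⟩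
      left_inv := fun f => Subtype.ext (funext fun x => by simp)
      right_inv := fun f => Subtype.ext (funext fun x => by simp)
      map_mul' := fun f g => Subtype.ext (funext fun x => by simp) }
  map_one' := by
    ext f x
    simp
  map_mul' h₁ h₂ := by
    ext f x
    simp [mul_assoc]

/-- The regular wreath product `G ≀ H`: the base is `⨁_{h ∈ H} G` and `H` acts by
permuting coordinates via right multiplication on the index set `H`. -/
abbrev RegularWreath (G H : Type*) [Group G] [Group H] :=
  WreathBase G H ⋊[regularWreathAut G H] H

section AuxIG

namespace StmtAux

open Subgroup
open scoped Classical
set_option linter.unusedSectionVars false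

/-- `IsIG` in terms of subgroups meeting every conjugacy class. -/
theorem isIG_iff_cm (K : Type*) [Group K] :
    IsIG K ↔ ∀ C : Subgroup K, (∀ k : K, ∃ c ∈ C, IsConj k c) → C = ⊤ := by
  constructor
  · intro hIG C hC
    have h' : ∀ k : K, ∃ u : K, u * k * u⁻¹ ∈ C := by
      intro k
      obtain ⟨c, hc, h⟩ := hC k
      obtain ⟨u, hu⟩ := isConj_iff.mp h
      exact ⟨u, hu ▸ hc⟩
    choose u hu using h'
    have h2 := hIG fun k => (u k)⁻¹
    rw [eq_top_iff, ← h2]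
    refine (Subgroup.closure_le _).mpr ?_
    rintro x ⟨k, -, rfl⟩
    simpa using hu k
  · intro h a
    apply h
    intro k
    refine ⟨(a k)⁻¹ * k * a k, Subgroup.subset_closure ⟨k, Set.mem_univ k, rfl⟩, ?_⟩
    exact isConj_iff.mpr ⟨(a k)⁻¹, by group⟩

variable {G H : Type*} [Group G] [Group H]

local notation "Φ" => regularWreathAut G H

@[simp] lemma wb_coe_mul (f g : WreathBase G H) (x : H) :
    ((f * g : WreathBase G H) : H → G) x = (f : H → G) x * (g : H → G) x := rfl

@[simp] lemma wb_coe_inv (f : WreathBase G H) (x : H) :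
    ((f⁻¹ : WreathBase G H) : H → G) x = ((f : H → G) x)⁻¹ := rfl

@[simp] lemma wb_coe_one (x : H) : ((1 : WreathBase G H) : H → G) x = 1 := rfl

lemma single_apply (y : H) (g : G) (x : H) :
    (WreathBase.single H y g : H → G) x = if x = y then g else 1 := rfl

@[simp] lemma single_apply_self (y : H) (g : G) :
    (WreathBase.single H y g : H → G) y = g := by simp [single_apply]

lemma single_apply_ne (y : H) (g : G) {x : H} (h : x ≠ y) :
    (WreathBase.single H y g : H → G) x = 1 := by simp [single_apply, h]

lemma aut_apply (h : H) (f : WreathBase G H) (x : H) :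
    (Φ h f : H → G) x = (f : H → G) (x * h) := rfl

lemma aut_single (h y : H) (g : G) :
    Φ h (WreathBase.single H y g) = WreathBase.single H (y * h⁻¹) g := by
  apply Subtype.ext; funext x
  show (if x * h = y then g else 1) = if x = y * h⁻¹ then g else 1
  congr 1
  simp [eq_mul_inv_iff_mul_eq]

lemma base_conj_single (b : WreathBase G H) (z : H) (v : G) :
    b * WreathBase.single H z v * b⁻¹
      = WreathBase.single H z ((b : H → G) z * v * ((b : H → G) z)⁻¹) := by
  apply Subtype.ext; funext x
  show (b : H → G) x * (if x = z then v else 1) * ((b : H → G) x)⁻¹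
      = if x = z then _ else 1
  by_cases h : x = z
  · subst h; simp
  · simp [h]

end StmtAux

end AuxIG
section AuxIG2

namespace StmtAux

open Subgroup
open scoped Classical
set_option linter.unusedSectionVars false

variable {G H : Type*} [Group G] [Group H]

local notation "Φ" => regularWreathAut G H

lemma inr_mul_inl (k : H) (m : WreathBase G H) :
    (inr k * inl m : RegularWreath G H) = inl (Φ k m) * inr k := by
  rw [inl_aut]
  simp [mul_assoc]

lemma inr_mul_inl' (k : H) (m : WreathBase G H) (x : RegularWreath G H) :
    inr k * (inl m * x) = inl (Φ k m) * (inr k * x) := by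
  rw [← mul_assoc, inr_mul_inl, mul_assoc]

/-- canonical conjugated form `inl b * inl m * inr τ * inl b⁻¹`. -/
def P (b m : WreathBase G H) (τ : H) : RegularWreath G H :=
  inl b * inl m * inr τ * inl b⁻¹

lemma conj_inl_inr (u : RegularWreath G H) (m : WreathBase G H) (τ : H) :
    u * (inl m * inr τ) * u⁻¹
      = P u.left (Φ u.right m) (u.right * τ * u.right⁻¹) := by
  set b := u.left
  set k := u.right
  have hu : u = inl b * inr k := (inl_left_mul_inr_right u).symm
  rw [hu, P]
  simp only [mul_inv_rev, ← map_inv]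
  calc inl b * inr k * (inl m * inr τ) * (inr k⁻¹ * inl b⁻¹)
      = inl b * (inr k * (inl m * (inr τ * (inr k⁻¹ * inl b⁻¹)))) := by
        simp only [mul_assoc]
    _ = inl b * (inl (Φ k m) * (inr k * (inr τ * (inr k⁻¹ * inl b⁻¹)))) := by
        rw [inr_mul_inl']
    _ = inl b * (inl (Φ k m) * (inr (k * τ * k⁻¹) * inl b⁻¹)) := by
        congr 2
        rw [← mul_assoc, ← map_mul, ← mul_assoc, ← map_mul]
    _ = inl b * inl (Φ k m) * inr (k * τ * k⁻¹) * inl b⁻¹ := by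
        simp only [mul_assoc]

lemma conj_inl (u : RegularWreath G H) (F : WreathBase G H) :
    u * inl F * u⁻¹ = inl (u.left * Φ u.right F * u.left⁻¹) := by
  have h := conj_inl_inr u F 1
  simp only [map_one, mul_one] at h
  rw [h, P]
  simp [← map_mul, ← map_inv, mul_assoc]

lemma P_one (b : WreathBase G H) (τ : H) :
    P b 1 τ = inl b * inr τ * inl b⁻¹ := by
  simp [P]

/-- the ordered product `m · φ_τ(m) ⋯ φ_{τ^{n-1}}(m)`. -/
def Mn (m : WreathBase G H) (τ : H) (n : ℕ) : WreathBase G H :=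
  ((List.range n).map fun j => Φ (τ ^ j) m).prod

lemma Mn_succ (m : WreathBase G H) (τ : H) (n : ℕ) :
    Mn m τ (n + 1) = Mn m τ n * Φ (τ ^ n) m := by
  rw [Mn, List.range_succ, List.map_append, List.prod_append]
  simp [Mn]

lemma mid_pow (m : WreathBase G H) (τ : H) (n : ℕ) :
    (inl m * inr τ : RegularWreath G H) ^ n = inl (Mn m τ n) * inr (τ ^ n) := by
  induction n with
  | zero => simp [Mn]
  | succ n ih =>
    rw [pow_succ, ih, Mn_succ, map_mul, pow_succ, map_mul]
    calc inl (Mn m τ n) * inr (τ ^ n) * (inl m * inr τ)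
        = inl (Mn m τ n) * (inr (τ ^ n) * (inl m * inr τ)) := by
          simp only [mul_assoc]
      _ = inl (Mn m τ n) * (inl (Φ (τ ^ n) m) * (inr (τ ^ n) * inr τ)) := by
          rw [inr_mul_inl']
      _ = inl (Mn m τ n) * inl (Φ (τ ^ n) m) * (inr (τ ^ n) * inr τ) := by
          simp only [mul_assoc]

lemma P_pow (b m : WreathBase G H) (τ : H) (n : ℕ) :
    (P b m τ) ^ n = inl b * ((inl m * inr τ : RegularWreath G H) ^ n) * inl b⁻¹ := by
  have h : P b m τ = MulAut.conj (inl b) (inl m * inr τ) := by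
    simp [P, MulAut.conj_apply, mul_assoc, ← map_inv]
  rw [h, ← map_pow, MulAut.conj_apply]
  simp [← map_inv]

lemma P_zpow_one (a : WreathBase G H) (τ : H) (n : ℤ) :
    (P a 1 τ) ^ n = inl a * inr (τ ^ n) * inl a⁻¹ := by
  have h : P a 1 τ = MulAut.conj (inl a) (inr τ) := by
    simp [P, MulAut.conj_apply, mul_assoc, ← map_inv]
  rw [h, ← map_zpow, MulAut.conj_apply, ← map_zpow]
  simp [← map_inv]

lemma kappa (b m a : WreathBase G H) (τ : H) (n : ℕ) :
    (P b m τ) ^ n * ((P a 1 τ) ^ n)⁻¹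
      = inl (b * Mn m τ n * Φ (τ ^ n) (b⁻¹ * a) * a⁻¹) := by
  have h2 : ((P a 1 τ) ^ n)⁻¹ = inl a * inr (τ ^ n)⁻¹ * inl a⁻¹ := by
    have h3 := P_zpow_one a τ (n : ℤ)
    rw [zpow_natCast, zpow_natCast] at h3
    rw [h3]
    simp only [mul_inv_rev, ← map_inv, inv_inv, ← mul_assoc]
  rw [P_pow, h2, mid_pow]
  calc inl b * (inl (Mn m τ n) * inr (τ ^ n)) * inl b⁻¹ * (inl a * inr (τ ^ n)⁻¹ * inl a⁻¹)
      = inl b * inl (Mn m τ n) * (inr (τ ^ n) * (inl (b⁻¹ * a) * (inr (τ ^ n)⁻¹ * inl a⁻¹))) := by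
        simp only [map_mul, mul_assoc]
    _ = inl b * inl (Mn m τ n) * (inl (Φ (τ ^ n) (b⁻¹ * a)) * (inr (τ ^ n) * (inr (τ ^ n)⁻¹ * inl a⁻¹))) := by
        rw [inr_mul_inl']
    _ = inl b * inl (Mn m τ n) * (inl (Φ (τ ^ n) (b⁻¹ * a)) * inl a⁻¹) := by
        rw [← mul_assoc (inr (τ ^ n)),
          show (inr (τ ^ n) * inr (τ ^ n)⁻¹ : RegularWreath G H) = 1 by
            rw [← map_mul, mul_inv_cancel, map_one], one_mul]
    _ = _ := by
        simp only [← map_mul, mul_assoc]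

lemma transport_single (a : WreathBase G H) (τ z : H) (v : G) :
    (P a 1 τ) * inl (WreathBase.single H z v) * (P a 1 τ)⁻¹
      = inl (WreathBase.single H (z * τ⁻¹)
          ((a : H → G) (z * τ⁻¹) * (((a : H → G) z)⁻¹ * v * (a : H → G) z)
            * ((a : H → G) (z * τ⁻¹))⁻¹)) := by
  have h2 : (P a 1 τ)⁻¹ = inl a * inr τ⁻¹ * inl a⁻¹ := by
    have h3 := P_zpow_one a τ (-1)
    simpa using h3
  rw [h2, P_one]
  have hconj : a⁻¹ * WreathBase.single H z v * a
      = WreathBase.single H z (((a : H → G) z)⁻¹ * v * (a : H → G) z) := by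
    have h4 := base_conj_single a⁻¹ z v
    simpa using h4
  calc inl a * inr τ * inl a⁻¹ * inl (WreathBase.single H z v) * (inl a * inr τ⁻¹ * inl a⁻¹)
      = inl a * (inr τ * (inl (a⁻¹ * WreathBase.single H z v * a) * (inr τ⁻¹ * inl a⁻¹))) := by
        simp only [map_mul, mul_assoc]
    _ = inl a * (inl (Φ τ (a⁻¹ * WreathBase.single H z v * a)) * (inr τ * (inr τ⁻¹ * inl a⁻¹))) := by
        rw [inr_mul_inl']
    _ = inl a * (inl (Φ τ (a⁻¹ * WreathBase.single H z v * a)) * inl a⁻¹) := by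
        rw [← mul_assoc (inr τ), ← map_mul, mul_inv_cancel, map_one, one_mul]
    _ = inl (a * Φ τ (WreathBase.single H z (((a : H → G) z)⁻¹ * v * (a : H → G) z)) * a⁻¹) := by
        rw [hconj]
        simp only [← map_mul, mul_assoc]
    _ = _ := by
        rw [aut_single, base_conj_single]

lemma conj_inr (u : RegularWreath G H) (τ : H) :
    u * inr τ * u⁻¹ = inl u.left * inr (u.right * τ * u.right⁻¹) * inl u.left⁻¹ := by
  have h := conj_inl_inr u 1 τ
  simp only [map_one, one_mul] at h
  rw [h, P]
  simp [mul_assoc]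

lemma conj_P_one (u : RegularWreath G H) (a : WreathBase G H) (τ : H) :
    u * (P a 1 τ) * u⁻¹ = P (u.left * Φ u.right a) 1 (u.right * τ * u.right⁻¹) := by
  rw [P_one, P_one]
  calc u * (inl a * inr τ * inl a⁻¹) * u⁻¹
      = (u * inl a * u⁻¹) * (u * inr τ * u⁻¹) * (u * inl a⁻¹ * u⁻¹) := by group
    _ = inl (u.left * Φ u.right a * u.left⁻¹)
          * (inl u.left * inr (u.right * τ * u.right⁻¹) * inl u.left⁻¹)
          * inl (u.left * Φ u.right a⁻¹ * u.left⁻¹) := by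
        rw [conj_inl, conj_inl, conj_inr]
    _ = _ := by
        simp only [P, map_mul, map_inv, map_one, mul_one, one_mul, mul_assoc,
          inv_mul_cancel_left, mul_inv_cancel_left, mul_inv_rev]

end StmtAux

end AuxIG2
section AuxIG3

namespace StmtAux

open Subgroup
open scoped Classical
set_option linter.unusedSectionVars false

lemma prod_range_ite {M : Type*} [Monoid M] (g : M) (j : ℕ) :
    ∀ n : ℕ, j < n → ((List.range n).map fun i => if i = j then g else 1).prod = g := by
  intro n
  induction n with
  | zero => omega
  | succ n ih =>
    intro hj
    rw [List.range_succ, List.map_append, List.prod_append]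
    rcases lt_or_eq_of_le (Nat.lt_succ_iff.mp hj) with h | h
    · rw [ih h]
      simp [Nat.ne_of_gt h]
    · subst h
      have h1 : ((List.range j).map fun i => if i = j then g else 1).prod = 1 := by
        apply List.prod_eq_one
        intro x hx
        obtain ⟨i, hi, rfl⟩ := List.mem_map.mp hx
        simp [Nat.ne_of_lt (List.mem_range.mp hi)]
      rw [h1, one_mul]
      simp

variable {G H : Type*} [Group G] [Group H]

local notation "Φ" => regularWreathAut G H

/-- evaluation at a coordinate, as a homomorphism. -/
def ev (x : H) : WreathBase G H →* G :=
  (Pi.evalMonoidHom (fun _ => G) x).comp (WreathBase G H).subtype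

@[simp] lemma ev_apply (x : H) (f : WreathBase G H) : ev x f = (f : H → G) x := rfl

lemma Mn_apply (m : WreathBase G H) (τ : H) (n : ℕ) (x : H) :
    ((Mn m τ n : WreathBase G H) : H → G) x
      = ((List.range n).map fun j => (m : H → G) (x * τ ^ j)).prod := by
  have h := map_list_prod (ev (G := G) (H := H) x) ((List.range n).map fun j => Φ (τ ^ j) m)
  rw [Mn, ← ev_apply, h, List.map_map]
  rfl

lemma escape {t : H} (ht : Function.Injective fun n : ℤ => t ^ n)
    (S : Set H) (hS : S.Finite) (k : H) :
    ∃ J : ℕ, 1 ≤ J ∧ ∀ p : ℤ, (J : ℤ) ≤ |p| → t ^ p * k ∉ S := by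
  have hinj : Function.Injective fun p : ℤ => t ^ p * k := by
    intro a b hab
    exact ht (mul_right_cancel hab)
  have hfin : ((fun p : ℤ => t ^ p * k) ⁻¹' S).Finite := hS.preimage hinj.injOn
  obtain ⟨M, hM⟩ := (hfin.image fun p => p.natAbs).bddAbove
  refine ⟨M + 1, by omega, ?_⟩
  intro p hp hmem
  have h1 : p.natAbs ≤ M := hM ⟨p, hmem, rfl⟩
  have h2 : ((M : ℤ) + 1) ≤ |p| := by exact_mod_cast hp
  rw [Int.abs_eq_natAbs] at h2
  omega

lemma base_mem_of_singles (C : Subgroup (RegularWreath G H))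
    (hs : ∀ (y : H) (g : G), inl (WreathBase.single H y g) ∈ C)
    (f : WreathBase G H) : inl f ∈ C := by
  suffices h : ∀ (s : Finset H) (f : WreathBase G H),
      (mulSupport (f : H → G)) ⊆ s → inl f ∈ C by
    exact h (f.2 : (mulSupport (f : H → G)).Finite).toFinset f (fun x hx => (Set.Finite.mem_toFinset _).mpr hx)
  intro s
  induction s using Finset.induction_on with
  | empty =>
    intro f hf
    have hf1 : f = 1 := by
      apply Subtype.ext; funext x
      by_contra hx
      simpa using hf hx
    rw [hf1, map_one]
    exact one_mem C
  | @insert y s hy ih =>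
    intro f hf
    set g0 := (f : H → G) y with hg0
    set f' := (WreathBase.single H y g0)⁻¹ * f with hf'
    have hsupp : mulSupport (f' : H → G) ⊆ s := by
      intro x hx
      have hval : (f' : H → G) x = ((WreathBase.single H y g0 : H → G) x)⁻¹ * (f : H → G) x := rfl
      by_cases hxy : x = y
      · subst hxy
        exfalso
        apply hx
        rw [hval, single_apply_self]
        exact inv_mul_cancel _
      · have hx' : (f' : H → G) x ≠ 1 := hx
        rw [hval, single_apply_ne _ _ hxy, inv_one, one_mul] at hx'
        have := hf (hx' : x ∈ mulSupport (f : H → G))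
        simp only [Finset.coe_insert, Set.mem_insert_iff] at this
        tauto
    have heq : f = WreathBase.single H y g0 * f' := by
      rw [hf', mul_inv_cancel_left]
    rw [heq, map_mul]
    exact mul_mem (hs y g0) (ih f' hsupp)

end StmtAux

end AuxIG3
section AuxIG4

namespace StmtAux

open Subgroup
open scoped Classical
set_option linter.unusedSectionVars false
set_option maxHeartbeats 2000000

variable {G H : Type*} [Group G] [Group H]

local notation "Φ" => regularWreathAut G H

lemma mul_inl_inr_left (c : WreathBase G H) (h : H) : (inl c * inr h : RegularWreath G H).left = c := by
  simp

lemma mul_inl_inr_right (c : WreathBase G H) (h : H) : (inl c * inr h : RegularWreath G H).right = h := by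
  simp

lemma conj_inl_inv (c : WreathBase G H) (h : H) (K : WreathBase G H) :
    (inl c * inr h : RegularWreath G H)⁻¹ * inl K * (inl c * inr h)
      = inl (Φ h⁻¹ (c⁻¹ * K * c)) := by
  have h1 := conj_inl ((inl c * inr h : RegularWreath G H)⁻¹) K
  rw [inv_inv] at h1
  rw [h1, inv_left, inv_right, mul_inl_inr_left, mul_inl_inr_right]
  congr 1
  simp only [map_mul, map_inv, inv_inv]

theorem master_isIG
    (hH : ∀ C : Subgroup H, (∀ k : H, ∃ c ∈ C, IsConj k c) → C = ⊤)
    (t : H) (ht : Function.Injective fun n : ℤ => t ^ n) :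
    IsIG (RegularWreath G H) := by
  rw [isIG_iff_cm]
  intro C hC
  have hconjpow : ∀ (k : H) (p q : ℤ), (t ^ p * k⁻¹) * (k * t * k⁻¹) ^ q = t ^ (p + q) * k⁻¹ := by
    intro k p q
    have h1 : (k * t * k⁻¹) ^ q = k * t ^ q * k⁻¹ := by
      rw [← MulAut.conj_apply, ← map_zpow, MulAut.conj_apply]
    rw [h1, zpow_add]
    group
  -- surjectivity of C onto H
  have habove : ∀ h : H, ∃ w : RegularWreath G H, w ∈ C ∧ w.right = h := by
    have hmap : ∀ k : H, ∃ c ∈ Subgroup.map (rightHom (φ := regularWreathAut G H)) C,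
        IsConj k c := by
      intro k
      obtain ⟨c, hc, hconj⟩ := hC (inr k)
      refine ⟨rightHom c, Subgroup.mem_map_of_mem _ hc, ?_⟩
      have h2 := rightHom.map_isConj hconj
      simpa using h2
    have htop := hH _ hmap
    intro h
    have hmem : h ∈ Subgroup.map (rightHom (φ := regularWreathAut G H)) C := by
      rw [htop]; trivial
    obtain ⟨w, hw, hwr⟩ := hmem
    exact ⟨w, hw, hwr⟩
  choose lift hliftC hliftr using habove
  -- the reference element ŵ = P a0 1 s, conjugate of inr t
  obtain ⟨cw, hcwC, hconjw⟩ := hC (inr t)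
  obtain ⟨u0, hu0⟩ := isConj_iff.mp hconjw
  set a0 : WreathBase G H := u0.left with ha0
  set k0 : H := u0.right with hk0
  set s : H := k0 * t * k0⁻¹ with hs
  have hw : P a0 1 s ∈ C := by
    have h := conj_inl_inr u0 1 t
    simp only [map_one, one_mul] at h
    rw [hu0] at h
    exact h ▸ hcwC
  -- the line coordinates
  set ℓ : ℤ → H := fun p => t ^ p * k0⁻¹ with hℓdef
  have hℓs : ∀ (p q : ℤ), ℓ p * s ^ q = ℓ (p + q) := fun p q => hconjpow k0 p q
  -- translation with a conjugator depending only on the coordinates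
  have htrans : ∀ (z h : H), ∃ w : G, ∀ v : G,
      inl (WreathBase.single H z v) ∈ C →
      inl (WreathBase.single H (z * h⁻¹) (w * v * w⁻¹)) ∈ C := by
    intro z h
    refine ⟨((lift h).left : H → G) (z * h⁻¹), ?_⟩
    intro v hv
    have hmem : (lift h) * inl (WreathBase.single H z v) * (lift h)⁻¹ ∈ C :=
      mul_mem (mul_mem (hliftC h) hv) (inv_mem (hliftC h))
    rw [conj_inl, hliftr, aut_single, base_conj_single] at hmem
    exact hmem
  -- seeds: a conjugate of each v sits in C as a single
  have hseed : ∀ v : G, ∃ (q : H) (v1 : G), IsConj v v1 ∧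
      inl (WreathBase.single H q v1) ∈ C := by
    intro v
    obtain ⟨c, hc, hcj⟩ := hC (inl (WreathBase.single H 1 v))
    obtain ⟨u, hu⟩ := isConj_iff.mp hcj
    have h := conj_inl u (WreathBase.single H 1 v)
    rw [hu] at h
    rw [aut_single, one_mul, base_conj_single] at h
    exact ⟨u.right⁻¹, _, isConj_iff.mpr ⟨(u.left : H → G) u.right⁻¹, rfl⟩, h ▸ hc⟩
  -- escape bound for a0
  obtain ⟨J0, hJ0pos, hJ0⟩ := escape ht (mulSupport (a0 : H → G)) a0.2 k0⁻¹
  have ha0far : ∀ m : ℕ, J0 ≤ m → (a0 : H → G) (ℓ (-(m : ℤ))) = 1 := by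
    intro m hm
    have h := hJ0 (-(m : ℤ)) (by rw [abs_neg, Int.abs_natCast]; exact_mod_cast hm)
    exact Function.notMem_mulSupport.mp h
  -- transport from ℓ 0 into the tail, with fixed conjugator
  have htail0 : ∀ v : G, inl (WreathBase.single H (ℓ 0) v) ∈ C →
      ∀ m : ℕ, J0 ≤ m →
      inl (WreathBase.single H (ℓ (-(m : ℤ)))
        (((a0 : H → G) (ℓ 0))⁻¹ * v * (a0 : H → G) (ℓ 0))) ∈ C := by
    intro v hv m hm
    have hPmem : P a0 1 (s ^ ((m : ℕ) : ℤ)) ∈ C := by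
      have h1 : P a0 1 (s ^ ((m : ℕ) : ℤ)) = (P a0 1 s) ^ ((m : ℕ) : ℤ) := by
        rw [P_zpow_one, P_one]
      rw [h1]
      exact zpow_mem hw _
    have hmem : (P a0 1 (s ^ ((m : ℕ) : ℤ))) * inl (WreathBase.single H (ℓ 0) v)
        * (P a0 1 (s ^ ((m : ℕ) : ℤ)))⁻¹ ∈ C :=
      mul_mem (mul_mem hPmem hv) (inv_mem hPmem)
    rw [transport_single] at hmem
    have hcoord : ℓ 0 * (s ^ ((m : ℕ) : ℤ))⁻¹ = ℓ (-(m : ℤ)) := by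
      rw [← zpow_neg, hℓs]
      congr 1
      ring
    rw [hcoord, ha0far m hm] at hmem
    simpa using hmem
  -- transport back from the tail to ℓ 0, with fixed conjugator
  have htail0' : ∀ (v : G) (m : ℕ), J0 ≤ m →
      inl (WreathBase.single H (ℓ (-(m : ℤ))) v) ∈ C →
      inl (WreathBase.single H (ℓ 0)
        ((a0 : H → G) (ℓ 0) * v * ((a0 : H → G) (ℓ 0))⁻¹)) ∈ C := by
    intro v m hm hv
    have hPmem : P a0 1 (s ^ (-(m : ℤ))) ∈ C := by
      have h1 : P a0 1 (s ^ (-(m : ℤ))) = (P a0 1 s) ^ (-(m : ℤ)) := by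
        rw [P_zpow_one, P_one]
      rw [h1]
      exact zpow_mem hw _
    have hmem : (P a0 1 (s ^ (-(m : ℤ)))) * inl (WreathBase.single H (ℓ (-(m : ℤ))) v)
        * (P a0 1 (s ^ (-(m : ℤ))))⁻¹ ∈ C :=
      mul_mem (mul_mem hPmem hv) (inv_mem hPmem)
    rw [transport_single] at hmem
    have hcoord : ℓ (-(m : ℤ)) * (s ^ (-(m : ℤ)))⁻¹ = ℓ 0 := by
      rw [← zpow_neg, neg_neg, hℓs]
      congr 1
      ring
    rw [hcoord, ha0far m hm] at hmem
    simpa using hmem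
  -- every conjugacy class of G has an element with a C-tail
  have hmeet : ∀ v : G, ∃ v3, (∃ N : ℕ, ∀ m : ℕ, N ≤ m →
      inl (WreathBase.single H (ℓ (-(m : ℤ))) v3) ∈ C) ∧ IsConj v v3 := by
    intro v
    obtain ⟨q, v1, hcj1, hv1⟩ := hseed v
    obtain ⟨w2, hw2⟩ := htrans q (k0 * q)
    have hv2 := hw2 v1 hv1
    have hcoord : q * (k0 * q)⁻¹ = ℓ 0 := by
      simp only [hℓdef]
      group
    rw [hcoord] at hv2
    refine ⟨((a0 : H → G) (ℓ 0))⁻¹ * (w2 * v1 * w2⁻¹) * (a0 : H → G) (ℓ 0),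
      ⟨J0, fun m hm => htail0 _ hv2 m hm⟩, ?_⟩
    refine hcj1.trans ?_
    refine (isConj_iff.mpr ⟨w2, rfl⟩).trans ?_
    exact isConj_iff.mpr ⟨((a0 : H → G) (ℓ 0))⁻¹, by group⟩
  -- exact-g-valued elements of C ∩ Base on the tail of the line
  have hP1 : ∀ g : G, ∃ J : ℕ, ∀ j : ℕ, J ≤ j → ∃ F : WreathBase G H,
      inl F ∈ C ∧ (F : H → G) (ℓ (-(j : ℤ))) = g := by
    intro g
    obtain ⟨c, hc, hcj⟩ := hC (inl (WreathBase.single H 1 g) * inr t)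
    obtain ⟨u, hu⟩ := isConj_iff.mp hcj
    set bg : WreathBase G H := u.left with hbg
    set kg : H := u.right with hkg
    set sg : H := kg * t * kg⁻¹ with hsg
    set mg : WreathBase G H := WreathBase.single H kg⁻¹ g with hmg
    have hwg : P bg mg sg ∈ C := by
      have h := conj_inl_inr u (WreathBase.single H 1 g) t
      rw [hu] at h
      rw [aut_single, one_mul] at h
      exact h ▸ hc
    set hg : H := kg * k0⁻¹ with hhg
    set cg : WreathBase G H := (lift hg).left with hcg
    set ag : WreathBase G H := cg * Φ hg a0 with hag
    have hvgform : lift hg = inl cg * inr hg := by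
      conv_lhs => rw [← inl_left_mul_inr_right (lift hg)]
      rw [hliftr]
    have hwG : P ag 1 sg ∈ C := by
      have h := conj_P_one (lift hg) a0 s
      rw [hliftr hg] at h
      have hgs : hg * s * hg⁻¹ = sg := by
        rw [hhg, hs, hsg]
        group
      rw [hgs] at h
      exact h ▸ mul_mem (mul_mem (hliftC hg) hw) (inv_mem (hliftC hg))
    obtain ⟨J, hJ1, hJ⟩ := escape ht
      ((mulSupport (bg : H → G) ∪ mulSupport (ag : H → G)) ∪ mulSupport (cg : H → G))
      ((bg.2.union ag.2).union cg.2) kg⁻¹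
    have hfar : ∀ p : ℤ, (J : ℤ) ≤ |p| →
        (bg : H → G) (t ^ p * kg⁻¹) = 1 ∧ (ag : H → G) (t ^ p * kg⁻¹) = 1 ∧
          (cg : H → G) (t ^ p * kg⁻¹) = 1 := by
      intro p hp
      have h := hJ p hp
      simp only [Set.mem_union, not_or] at h
      exact ⟨Function.notMem_mulSupport.mp h.1.1, Function.notMem_mulSupport.mp h.1.2,
        Function.notMem_mulSupport.mp h.2⟩
    refine ⟨J, fun j hj => ?_⟩
    set n : ℕ := j + J with hn
    set K : WreathBase G H := bg * Mn mg sg n * Φ (sg ^ n) (bg⁻¹ * ag) * ag⁻¹ with hK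
    have hKC : inl K ∈ C := by
      have h := kappa bg mg ag sg n
      exact h ▸ mul_mem (pow_mem hwg n) (inv_mem (pow_mem hwG n))
    set x : H := t ^ (-(j : ℤ)) * kg⁻¹ with hx
    have hxcoord : ∀ i : ℕ, x * sg ^ i = t ^ ((i : ℤ) - (j : ℤ)) * kg⁻¹ := by
      intro i
      rw [hx, show (sg ^ i : H) = sg ^ ((i : ℕ) : ℤ) by rw [zpow_natCast], hsg, hconjpow kg]
      congr 1
      ring
    have hjfar : (J : ℤ) ≤ |(-(j : ℤ))| := by
      rw [abs_neg, Int.abs_natCast]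
      exact_mod_cast hj
    have hnfar : (J : ℤ) ≤ |((n : ℤ) - (j : ℤ))| := by
      have h1 : ((n : ℤ) - (j : ℤ)) = (J : ℤ) := by
        rw [hn]
        push_cast
        ring
      rw [h1, Int.abs_natCast]
    have hMnx : ((Mn mg sg n : WreathBase G H) : H → G) x = g := by
      rw [Mn_apply]
      have hfun : (fun i : ℕ => (mg : H → G) (x * sg ^ i))
          = fun i : ℕ => if i = j then g else 1 := by
        funext i
        rw [hxcoord i, hmg, single_apply]
        by_cases hij : i = j
        · subst hij
          simp
        · rw [if_neg, if_neg hij]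
          intro hEq
          apply hij
          have h2 : t ^ ((i : ℤ) - (j : ℤ)) = t ^ (0 : ℤ) := by
            rw [zpow_zero]
            have h4 : t ^ ((i : ℤ) - (j : ℤ)) * kg⁻¹ = 1 * kg⁻¹ := by
              rw [one_mul]; exact hEq
            exact mul_right_cancel h4
          have h3 := ht h2
          omega
      rw [hfun]
      exact prod_range_ite g j n (by omega)
    have hKx : (K : H → G) x = g := by
      have hbgx : (bg : H → G) x = 1 := (hfar (-(j : ℤ)) hjfar).1
      have hagx : (ag : H → G) x = 1 := (hfar (-(j : ℤ)) hjfar).2.1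
      have hmidx : ((bg⁻¹ * ag : WreathBase G H) : H → G) (x * sg ^ n) = 1 := by
        rw [hxcoord n]
        rw [wb_coe_mul, wb_coe_inv, (hfar _ hnfar).1, (hfar _ hnfar).2.1]
        simp
      have hKval : (K : H → G) x
          = (bg : H → G) x * ((Mn mg sg n : WreathBase G H) : H → G) x
            * ((bg⁻¹ * ag : WreathBase G H) : H → G) (x * sg ^ n) * ((ag : H → G) x)⁻¹ := rfl
      rw [hKval, hbgx, hagx, hMnx, hmidx]
      simp
    -- transfer the g-valued element to the k0-line
    have hmem2 : (lift hg)⁻¹ * inl K * (lift hg) ∈ C :=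
      mul_mem (mul_mem (inv_mem (hliftC hg)) hKC) (hliftC hg)
    rw [hvgform, conj_inl_inv] at hmem2
    refine ⟨_, hmem2, ?_⟩
    have hy : ℓ (-(j : ℤ)) * hg⁻¹ = x := by
      simp only [hℓdef, hx, hhg]
      group
    have hcgx : (cg : H → G) x = 1 := (hfar (-(j : ℤ)) hjfar).2.2
    calc (Φ hg⁻¹ (cg⁻¹ * K * cg) : H → G) (ℓ (-(j : ℤ)))
        = ((cg⁻¹ * K * cg : WreathBase G H) : H → G) (ℓ (-(j : ℤ)) * hg⁻¹) := by
          rw [aut_apply]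
      _ = ((cg : H → G) x)⁻¹ * (K : H → G) x * (cg : H → G) x := by
          rw [hy]
          rfl
      _ = g := by rw [hcgx, hKx]; simp
  -- the set of tail values is closed under conjugation
  have hTailconj : ∀ (qq v : G),
      (∃ N : ℕ, ∀ m : ℕ, N ≤ m → inl (WreathBase.single H (ℓ (-(m : ℤ))) v) ∈ C) →
      (∃ N : ℕ, ∀ m : ℕ, N ≤ m →
        inl (WreathBase.single H (ℓ (-(m : ℤ))) (qq⁻¹ * v * qq)) ∈ C) := by
    rintro qq v ⟨N, hN⟩
    obtain ⟨J, hF⟩ := hP1 qq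
    refine ⟨max N J, fun m hm => ?_⟩
    obtain ⟨F, hFC, hFval⟩ := hF m (le_trans (le_max_right _ _) hm)
    have hv := hN m (le_trans (le_max_left _ _) hm)
    have hmem : (inl F)⁻¹ * inl (WreathBase.single H (ℓ (-(m : ℤ))) v) * inl F ∈ C :=
      mul_mem (mul_mem (inv_mem hFC) hv) hFC
    rw [← map_inv, ← map_mul, ← map_mul] at hmem
    have hbase : F⁻¹ * WreathBase.single H (ℓ (-(m : ℤ))) v * F
        = WreathBase.single H (ℓ (-(m : ℤ))) (qq⁻¹ * v * qq) := by
      have h := base_conj_single F⁻¹ (ℓ (-(m : ℤ))) v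
      rw [inv_inv] at h
      rw [h]
      congr 1
      rw [wb_coe_inv, hFval, inv_inv]
    rw [hbase] at hmem
    exact hmem
  -- hence every element of G is a tail value
  have hTailAll : ∀ v : G, ∃ N : ℕ, ∀ m : ℕ, N ≤ m →
      inl (WreathBase.single H (ℓ (-(m : ℤ))) v) ∈ C := by
    intro v
    obtain ⟨v3, hv3, hcj⟩ := hmeet v
    obtain ⟨w, hwv⟩ := isConj_iff.mp hcj
    have h := hTailconj w v3 hv3
    have h2 : w⁻¹ * v3 * w = v := by
      rw [← hwv]
      group
    rw [h2] at h
    exact h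
  -- all singles at ℓ 0
  have hℓ0 : ∀ u : G, inl (WreathBase.single H (ℓ 0) u) ∈ C := by
    intro u
    obtain ⟨N, hN⟩ := hTailAll (((a0 : H → G) (ℓ 0))⁻¹ * u * (a0 : H → G) (ℓ 0))
    have hm := hN (max N J0) (le_max_left _ _)
    have h := htail0' _ (max N J0) (le_max_right _ _) hm
    have h2 : (a0 : H → G) (ℓ 0) * (((a0 : H → G) (ℓ 0))⁻¹ * u * (a0 : H → G) (ℓ 0))
        * ((a0 : H → G) (ℓ 0))⁻¹ = u := by group
    rw [h2] at h
    exact h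
  -- all singles everywhere
  have hsingles : ∀ (y : H) (u : G), inl (WreathBase.single H y u) ∈ C := by
    intro y u
    obtain ⟨w, hw2⟩ := htrans (ℓ 0) (y⁻¹ * ℓ 0)
    have h := hw2 (w⁻¹ * u * w) (hℓ0 _)
    have hcoord : ℓ 0 * (y⁻¹ * ℓ 0)⁻¹ = y := by group
    have h2 : w * (w⁻¹ * u * w) * w⁻¹ = u := by group
    rw [hcoord, h2] at h
    exact h
  -- conclude
  have hbase : ∀ f : WreathBase G H, inl f ∈ C := base_mem_of_singles C hsingles
  rw [eq_top_iff]
  intro w0 _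
  have h2 : (w0 * (lift w0.right)⁻¹).right = 1 := by
    simp [hliftr]
  have h3 : w0 * (lift w0.right)⁻¹ = inl ((w0 * (lift w0.right)⁻¹).left) := by
    conv_lhs => rw [← inl_left_mul_inr_right (w0 * (lift w0.right)⁻¹)]
    rw [h2, map_one, mul_one]
  have h4 : w0 * (lift w0.right)⁻¹ ∈ C := h3 ▸ hbase _
  have h5 : w0 = (w0 * (lift w0.right)⁻¹) * lift w0.right := by group
  rw [h5]
  exact mul_mem h4 (hliftC _)

end StmtAux

end AuxIG4
section AuxIG5

namespace StmtAux

open Subgroup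
open scoped Classical
set_option linter.unusedSectionVars false

/-- IG passes along surjections (for arbitrary invariably generating sets). -/
lemma invGen_surj {K Q : Type*} [Group K] [Group Q] (π : K →* Q)
    (hπ : Function.Surjective π) {S : Set K} (hS : InvariablyGenerates K S) :
    InvariablyGenerates Q (π '' S) := by
  intro b
  set a : K → K := fun k => Function.surjInv hπ (b (π k)) with ha
  have h := hS a
  have himg : (fun q => (b q)⁻¹ * q * b q) '' (π '' S)
      = π '' ((fun s => (a s)⁻¹ * s * a s) '' S) := by
    rw [Set.image_image, Set.image_image]
    apply Set.image_congr
    intro s _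
    simp [ha, map_mul, map_inv, Function.surjInv_eq hπ]
  rw [himg, ← MonoidHom.map_closure, h, Subgroup.map_top_of_surjective π hπ]

lemma isFIG_surj {K Q : Type*} [Group K] [Group Q] (π : K →* Q)
    (hπ : Function.Surjective π) (h : IsFIG K) : IsFIG Q := by
  obtain ⟨S, hfin, hgen⟩ := h
  exact ⟨π '' S, hfin.image π, invGen_surj π hπ hgen⟩

lemma isIG_of_comm (K : Type*) [CommGroup K] : IsIG K := by
  intro a
  have hfun : (fun s : K => (a s)⁻¹ * s * a s) '' Set.univ = Set.univ := by
    have h1 : (fun s : K => (a s)⁻¹ * s * a s) = id := by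
      funext s
      simp [mul_comm, mul_assoc]
    rw [h1, Set.image_id]
  rw [hfun, Subgroup.closure_univ]

lemma isIG_prod {A B : Type*} [Group A] [Group B] (hA : IsIG A) (hB : IsIG B) :
    IsIG (A × B) := by
  rw [isIG_iff_cm] at *
  intro C hC
  have hCA : ∀ a : A, ((a, (1 : B)) : A × B) ∈ C := by
    set CA : Subgroup A :=
      { carrier := {a : A | ((a, (1 : B)) : A × B) ∈ C}
        one_mem' := C.one_mem
        mul_mem' := fun {x y} hx hy => by
          have := C.mul_mem hx hy
          simpa using this
        inv_mem' := fun {x} hx => by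
          have := C.inv_mem hx
          simpa using this } with hCAdef
    have htop : CA = ⊤ := by
      apply hA
      intro k
      obtain ⟨c, hc, hconj⟩ := hC ((k, 1) : A × B)
      obtain ⟨u, hu⟩ := isConj_iff.mp hconj
      refine ⟨u.1 * k * u.1⁻¹, ?_, isConj_iff.mpr ⟨u.1, rfl⟩⟩
      have hcval : ((u.1 * k * u.1⁻¹, (1 : B)) : A × B) = c := by
        rw [← hu]
        ext <;> simp
      show ((u.1 * k * u.1⁻¹, (1 : B)) : A × B) ∈ C
      rw [hcval]
      exact hc
    intro a
    have : a ∈ CA := by rw [htop]; trivial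
    exact this
  have hCB : ∀ b : B, (((1 : A), b) : A × B) ∈ C := by
    set CB : Subgroup B :=
      { carrier := {b : B | (((1 : A), b) : A × B) ∈ C}
        one_mem' := C.one_mem
        mul_mem' := fun {x y} hx hy => by
          have := C.mul_mem hx hy
          simpa using this
        inv_mem' := fun {x} hx => by
          have := C.inv_mem hx
          simpa using this } with hCBdef
    have htop : CB = ⊤ := by
      apply hB
      intro k
      obtain ⟨c, hc, hconj⟩ := hC (((1 : A), k) : A × B)
      obtain ⟨u, hu⟩ := isConj_iff.mp hconj
      refine ⟨u.2 * k * u.2⁻¹, ?_, isConj_iff.mpr ⟨u.2, rfl⟩⟩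
      have hcval : (((1 : A), u.2 * k * u.2⁻¹) : A × B) = c := by
        rw [← hu]
        ext <;> simp
      show (((1 : A), u.2 * k * u.2⁻¹) : A × B) ∈ C
      rw [hcval]
      exact hc
    intro b
    have : b ∈ CB := by rw [htop]; trivial
    exact this
  rw [eq_top_iff]
  rintro ⟨a, b⟩ -
  have h1 : ((a, b) : A × B) = (a, 1) * (1, b) := by ext <;> simp
  rw [h1]
  exact C.mul_mem (hCA a) (hCB b)

variable {G H : Type*} [Group G] [Group H]

lemma fg_regularWreath (hG : Group.FG G) (hH : Group.FG H) :
    Group.FG (RegularWreath G H) := by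
  obtain ⟨SG, hSGtop, hSGfin⟩ := Group.fg_iff.mp hG
  obtain ⟨SH, hSHtop, hSHfin⟩ := Group.fg_iff.mp hH
  rw [Group.fg_iff]
  refine ⟨(fun g => (inl (WreathBase.single H 1 g) : RegularWreath G H)) '' SG
      ∪ ((inr : H →* RegularWreath G H) '' SH),
    ?_, Set.Finite.union (hSGfin.image _) (hSHfin.image _)⟩
  set K := Subgroup.closure ((fun g => (inl (WreathBase.single H 1 g) : RegularWreath G H)) '' SG
      ∪ ((inr : H →* RegularWreath G H) '' SH)) with hK
  have hinr : ∀ h : H, (inr h : RegularWreath G H) ∈ K := by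
    intro h
    have h1 : Subgroup.map (inr : H →* RegularWreath G H) ⊤ ≤ K := by
      rw [← hSHtop, MonoidHom.map_closure]
      apply Subgroup.closure_le _ |>.mpr
      intro x hx
      exact Subgroup.subset_closure (Set.mem_union_right _ hx)
    exact h1 ⟨h, trivial, rfl⟩
  have hone : ∀ g : G, (inl (WreathBase.single H 1 g) : RegularWreath G H) ∈ K := by
    intro g
    have h1 : Subgroup.map ((inl : WreathBase G H →* RegularWreath G H).comp
        (WreathBase.single H 1)) ⊤ ≤ K := by
      rw [← hSGtop, MonoidHom.map_closure]
      apply Subgroup.closure_le _ |>.mpr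
      intro x hx
      obtain ⟨g', hg', rfl⟩ := hx
      exact Subgroup.subset_closure (Set.mem_union_left _ ⟨g', hg', rfl⟩)
    exact h1 ⟨g, trivial, rfl⟩
  have hsingle : ∀ (y : H) (g : G), (inl (WreathBase.single H y g) : RegularWreath G H) ∈ K := by
    intro y g
    have h1 : (inr y⁻¹ : RegularWreath G H) * inl (WreathBase.single H 1 g) * (inr y⁻¹)⁻¹ ∈ K :=
      mul_mem (mul_mem (hinr y⁻¹) (hone g)) (inv_mem (hinr y⁻¹))
    rw [← map_inv, ← inl_aut, aut_single, one_mul, inv_inv] at h1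
    exact h1
  have hbase := base_mem_of_singles K hsingle
  rw [eq_top_iff]
  intro w _
  rw [← inl_left_mul_inr_right w]
  exact mul_mem (hbase w.left) (hinr w.right)

lemma fg_prod {A B : Type*} [Group A] [Group B] (hA : Group.FG A) (hB : Group.FG B) :
    Group.FG (A × B) := by
  obtain ⟨SA, hSAtop, hSAfin⟩ := Group.fg_iff.mp hA
  obtain ⟨SB, hSBtop, hSBfin⟩ := Group.fg_iff.mp hB
  rw [Group.fg_iff]
  refine ⟨((MonoidHom.inl A B : A →* A × B) '' SA) ∪ ((MonoidHom.inr A B : B →* A × B) '' SB),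
    ?_, Set.Finite.union (hSAfin.image _) (hSBfin.image _)⟩
  set K := Subgroup.closure (((MonoidHom.inl A B : A →* A × B) '' SA)
      ∪ ((MonoidHom.inr A B : B →* A × B) '' SB)) with hK
  have h1 : ∀ a : A, ((a, (1:B)) : A × B) ∈ K := by
    intro a
    have h : Subgroup.map (MonoidHom.inl A B) ⊤ ≤ K := by
      rw [← hSAtop, MonoidHom.map_closure]
      apply Subgroup.closure_le _ |>.mpr
      intro x hx
      exact Subgroup.subset_closure (Set.mem_union_left _ hx)
    exact h ⟨a, trivial, rfl⟩
  have h2 : ∀ b : B, (((1:A), b) : A × B) ∈ K := by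
    intro b
    have h : Subgroup.map (MonoidHom.inr A B) ⊤ ≤ K := by
      rw [← hSBtop, MonoidHom.map_closure]
      apply Subgroup.closure_le _ |>.mpr
      intro x hx
      exact Subgroup.subset_closure (Set.mem_union_right _ hx)
    exact h ⟨b, trivial, rfl⟩
  rw [eq_top_iff]
  rintro ⟨a, b⟩ -
  have h3 : ((a, b) : A × B) = (a, 1) * (1, b) := by ext <;> simp
  rw [h3]
  exact mul_mem (h1 a) (h2 b)

lemma fg_multiplicative_int : Group.FG (Multiplicative ℤ) := by
  rw [Group.fg_iff]
  refine ⟨{Multiplicative.ofAdd 1}, ?_, Set.finite_singleton _⟩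
  rw [eq_top_iff]
  intro x _
  rw [Subgroup.mem_closure_singleton]
  refine ⟨Multiplicative.toAdd x, ?_⟩
  apply Multiplicative.toAdd.injective
  rw [toAdd_zpow]
  simp

lemma fst_surjective {A B : Type*} [Group A] [Group B] :
    Function.Surjective (MonoidHom.fst A B) := fun a => ⟨(a, 1), rfl⟩

end StmtAux

end AuxIG5

open StmtAux

theorem stmt_7 (G A : Type*) [Group G] [Nontrivial G] [Group A]
    (hG : Group.FG G) (hA : Group.FG A) (hA₁ : IsIG A) (hA₂ : ¬ IsFIG A) :
    (Group.FG (RegularWreath G (A × Multiplicative ℤ)) ∧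
        IsIG (RegularWreath G (A × Multiplicative ℤ)) ∧
        ¬ IsFIG (RegularWreath G (A × Multiplicative ℤ))) ∧
      ((∃ a : A, ¬ IsOfFinOrder a) →
        Group.FG (RegularWreath G A) ∧ IsIG (RegularWreath G A) ∧
          ¬ IsFIG (RegularWreath G A)) := by
  constructor
  · refine ⟨fg_regularWreath hG (fg_prod hA fg_multiplicative_int), ?_, ?_⟩
    · -- IG
      set t₁ : A × Multiplicative ℤ := ((1 : A), Multiplicative.ofAdd (1 : ℤ)) with ht₁
      have hval : ∀ n : ℤ, t₁ ^ n = ((1 : A), Multiplicative.ofAdd n) := by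
        intro n
        have h1 : (t₁ ^ n).1 = 1 := by
          rw [ht₁]
          simp
        have h2 : (t₁ ^ n).2 = Multiplicative.ofAdd n := by
          apply Multiplicative.toAdd.injective
          rw [ht₁]
          simp [toAdd_zpow]
        exact Prod.ext h1 h2
      have hinj : Function.Injective fun n : ℤ => t₁ ^ n := by
        intro a b hab
        simp only [hval] at hab
        have h3 := congrArg Prod.snd hab
        simpa using h3
      exact master_isIG ((isIG_iff_cm _).mp (isIG_prod hA₁ (isIG_of_comm _))) t₁ hinj
    · -- not FIG
      intro h
      exact hA₂ (isFIG_surj (MonoidHom.fst A (Multiplicative ℤ)) fst_surjective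
        (isFIG_surj SemidirectProduct.rightHom SemidirectProduct.rightHom_surjective h))
  · rintro ⟨a, ha⟩
    refine ⟨fg_regularWreath hG hA, ?_, ?_⟩
    · exact master_isIG ((isIG_iff_cm A).mp hA₁) a
        (injective_zpow_iff_not_isOfFinOrder.mpr ha)
    · intro h
      exact hA₂ (isFIG_surj SemidirectProduct.rightHom SemidirectProduct.rightHom_surjective h)
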